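/- Let f(X) = a_0 ∏_{i=1}^m (X - α_i)^{e_i} be a polynomial of degree n ≥ 1 over ℂ with distinct roots α_1,...,α_m. Let 0 < γ < (1/2)·min_{i≠j}|α_i - α_j| (γ arbitrary positive if m = 1), let M = max_{1≤j≤m} ∑_{i=0}^n (γ + |α_j|)^i, let δ = min_{1≤j≤m} ( |a_0| γ^{e_j} ∏_{i≠j} (|α_i - α_j| - γ)^{e_i} ), and set ε = δ/M. Then for any polynomial g(X) = (a_0 + ε_0)X^n + (a_1 + ε_1)X^{n-1} + ... + (a_n + ε_n) with |ε_i| < ε for all 0 ≤ i ≤ n, the polynomial g has exactly e_j zeros (counted with multiplicity) in the open disk of center α_j and radius γ, for each 1 ≤ j ≤ m. -/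

import Mathlib

open Polynomial Metric Real Complex Set

noncomputable section
namespace RCAux

def ld (p : ℂ[X]) (z : ℂ) : ℂ := eval z (derivative p) / eval z p

lemma eval_form (a : ℂ) (s : Multiset ℂ) (z : ℂ) :
    eval z (C a * (s.map fun r => X - C r).prod) = a * (s.map fun r => z - r).prod := by
  rw [eval_mul, eval_C, eval_multiset_prod, Multiset.map_map]
  congr 2
  ext r
  simp

lemma eval_form_ne (a : ℂ) (ha : a ≠ 0) (s : Multiset ℂ) (z : ℂ) (hz : ∀ r ∈ s, z ≠ r) :
    eval z (C a * (s.map fun r => X - C r).prod) ≠ 0 := by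
  rw [eval_form]
  refine mul_ne_zero ha (Multiset.prod_ne_zero ?_)
  simp only [Multiset.mem_map]
  rintro ⟨r, hr, hzr⟩
  exact sub_ne_zero.2 (hz r hr) hzr

lemma circleIntegral_add {f g : ℂ → ℂ} {c : ℂ} {R : ℝ} (hf : CircleIntegrable f c R)
    (hg : CircleIntegrable g c R) :
    (∮ z in C(c, R), (f z + g z)) = (∮ z in C(c, R), f z) + ∮ z in C(c, R), g z := by
  simp only [circleIntegral, smul_add, intervalIntegral.integral_add hf.out hg.out]

lemma integral_sub_inv_outside {c r : ℂ} {R : ℝ} (hR : 0 ≤ R) (h : R < ‖r - c‖) :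
    (∮ z in C(c, R), (z - r)⁻¹) = 0 := by
  have hr : r ∉ closedBall c R := by
    simp only [mem_closedBall, Complex.dist_eq, not_le]; exact h
  refine circleIntegral_eq_zero_of_differentiable_on_off_countable hR Set.countable_empty
    ?_ fun z hz => ?_
  · intro z hz
    refine ((continuousAt_id.sub continuousAt_const).inv₀ (sub_ne_zero.2 ?_)).continuousWithinAt
    rintro rfl; exact hr hz
  · exact (differentiableAt_id.sub_const r).inv
      (sub_ne_zero.2 fun hzr => hr (hzr ▸ (ball_subset_closedBall hz.1)))

lemma integral_ld_prod (c : ℂ) (R : ℝ) (hR : 0 < R) (s : Multiset ℂ) :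
    ∀ (a : ℂ), a ≠ 0 → (∀ r ∈ s, ‖r - c‖ ≠ R) →
    (∮ z in C(c, R), ld (C a * (s.map fun r => X - C r).prod) z)
      = (2 * π * I) * ((s.filter fun r => ‖r - c‖ < R).card : ℂ) := by
  induction s using Multiset.induction_on with
  | empty => intro a ha _; simp [ld, circleIntegral]
  | cons r t ih =>
    intro a ha hs
    have hr : ‖r - c‖ ≠ R := hs r (Multiset.mem_cons_self r t)
    have ht : ∀ x ∈ t, ‖x - c‖ ≠ R := fun x hx => hs x (Multiset.mem_cons_of_mem hx)
    set q : ℂ[X] := C a * (t.map fun r => X - C r).prod with hq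
    have hfac : C a * (((r ::ₘ t).map fun r => X - C r).prod) = (X - C r) * q := by
      rw [Multiset.map_cons, Multiset.prod_cons]; ring
    -- nonvanishing on sphere
    have hsphere : ∀ z ∈ sphere c R, ∀ x ∈ (r ::ₘ t), z ≠ x := by
      intro z hz x hx h
      subst h
      rw [mem_sphere_iff_norm] at hz
      exact hs z hx hz
    have hqz : ∀ z ∈ sphere c R, eval z q ≠ 0 := by
      intro z hz
      rw [hq, eval_mul, eval_C, eval_multiset_prod, Multiset.map_map]
      refine mul_ne_zero ha (Multiset.prod_ne_zero ?_)
      simp only [Multiset.mem_map, Function.comp_apply, eval_sub, eval_X, eval_C]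
      rintro ⟨x, hx, hzx⟩
      exact sub_ne_zero.2 (hsphere z hz x (Multiset.mem_cons_of_mem hx)) hzx
    -- pointwise identity on the sphere
    have hEq : EqOn (ld (C a * (((r ::ₘ t).map fun r => X - C r).prod)))
        (fun z => (z - r)⁻¹ + ld q z) (sphere c R) := by
      intro z hz
      have hzr : z - r ≠ 0 := sub_ne_zero.2 (hsphere z hz r (Multiset.mem_cons_self r t))
      have hq0 := hqz z hz
      simp only [ld, hfac, derivative_mul, derivative_sub, derivative_X, derivative_C,
        sub_zero, one_mul, eval_add, eval_mul, eval_sub, eval_X, eval_C]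
      field_simp
    -- integrability
    have hcont_inv : CircleIntegrable (fun z => (z - r)⁻¹) c R := by
      refine ContinuousOn.circleIntegrable hR.le ?_
      refine (continuousOn_id.sub continuousOn_const).inv₀ ?_
      intro z hz
      exact sub_ne_zero.2 (hsphere z hz r (Multiset.mem_cons_self r t))
    have hcont_q : CircleIntegrable (ld q) c R := by
      refine ContinuousOn.circleIntegrable hR.le ?_
      exact ((Polynomial.continuous (derivative q)).continuousOn).div
        ((Polynomial.continuous q).continuousOn) hqz
    have hsplit : (∮ z in C(c, R), ld (C a * (((r ::ₘ t).map fun r => X - C r).prod)) z)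
        = (∮ z in C(c, R), (z - r)⁻¹) + ∮ z in C(c, R), ld q z := by
      rw [circleIntegral.integral_congr hR.le hEq]
      simp only [circleIntegral, smul_add,
        intervalIntegral.integral_add hcont_inv.out hcont_q.out]
    rw [hsplit, ih a ha ht]
    by_cases hin : ‖r - c‖ < R
    · rw [circleIntegral.integral_sub_inv_of_mem_ball (by rwa [mem_ball, Complex.dist_eq])]
      rw [Multiset.filter_cons, if_pos hin, Multiset.card_add, Multiset.card_singleton]
      push_cast; ring
    · have hout : R < ‖r - c‖ := lt_of_le_of_ne (not_lt.1 hin) (Ne.symm hr)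
      rw [integral_sub_inv_outside hR.le hout, Multiset.filter_cons, if_neg hin,
        Multiset.card_add, Multiset.card_zero]
      push_cast; ring


lemma integral_ld_sub_eq_zero (p q : ℂ[X]) (c : ℂ) (R : ℝ) (hR : 0 < R)
    (h : ∀ z ∈ sphere c R, ‖eval z q - eval z p‖ < ‖eval z p‖) :
    (∮ z in C(c, R), (ld q z - ld p z)) = 0 := by
  have hp : ∀ z ∈ sphere c R, eval z p ≠ 0 := by
    intro z hz h0
    have := h z hz
    rw [h0] at this
    simp at this
    exact (norm_nonneg _).not_gt this
  have hq : ∀ z ∈ sphere c R, eval z q ≠ 0 := by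
    intro z hz h0
    have := h z hz
    rw [h0, zero_sub, norm_neg] at this
    exact lt_irrefl _ this
  have hslit : ∀ z ∈ sphere c R, eval z q / eval z p ∈ Complex.slitPlane := by
    intro z hz
    have hp0 : (0:ℝ) < ‖eval z p‖ := by
      simpa [norm_pos_iff] using hp z hz
    have h1 : ‖eval z q / eval z p - 1‖ < 1 := by
      rw [div_sub_one (hp z hz), norm_div, div_lt_one hp0]
      exact h z hz
    refine Complex.mem_slitPlane_iff.2 (Or.inl ?_)
    have h2 : |(eval z q / eval z p - 1).re| < 1 :=
      lt_of_le_of_lt (Complex.abs_re_le_norm _) h1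
    have h3 : (eval z q / eval z p - 1).re = (eval z q / eval z p).re - 1 := by simp
    rw [h3] at h2
    have := abs_lt.1 h2
    linarith [this.1]
  set Φ : ℝ → ℂ := fun θ =>
    Complex.log (eval (circleMap c R θ) q / eval (circleMap c R θ) p) with hΦ
  set F : ℝ → ℂ := fun θ => deriv (circleMap c R) θ •
    (ld q (circleMap c R θ) - ld p (circleMap c R θ)) with hF
  have key : ∀ θ : ℝ, HasDerivAt Φ (F θ) θ := by
    intro θ
    set z := circleMap c R θ with hz
    have hzs : z ∈ sphere c R := circleMap_mem_sphere c hR.le θ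
    have hp0 := hp z hzs
    have hq0 := hq z hzs
    have hw : HasDerivAt (fun w => eval w q / eval w p)
        ((eval z (derivative q) * eval z p - eval z q * eval z (derivative p))
          / (eval z p) ^ 2) z := (q.hasDerivAt z).div (p.hasDerivAt z) hp0
    have hlog : HasDerivAt Complex.log (eval z q / eval z p)⁻¹ (eval z q / eval z p) :=
      Complex.hasDerivAt_log (hslit z hzs)
    have hcm : HasDerivAt (circleMap c R) (circleMap 0 R θ * I) θ := hasDerivAt_circleMap c R θ
    have hcomp := (hlog.comp z hw).comp θ hcm
    convert hcomp using 1
    show deriv (circleMap c R) θ • (ld q z - ld p z) = _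
    rw [deriv_circleMap]
    simp only [smul_eq_mul, ld]
    field_simp
    rfl
    rfl
  have hFcont : Continuous F := by
    have hcm : Continuous (circleMap c R) := continuous_circleMap c R
    have hd : Continuous (fun θ => deriv (circleMap c R) θ) := by
      simp only [deriv_circleMap]
      exact (continuous_circleMap 0 R).mul continuous_const
    have hterm : ∀ (r : ℂ[X]), (∀ z ∈ sphere c R, eval z r ≠ 0) →
        Continuous fun θ => ld r (circleMap c R θ) := by
      intro r hr
      exact ((r.derivative.continuous_aeval).comp hcm).div
        ((r.continuous_aeval).comp hcm)
        (fun θ => hr _ (circleMap_mem_sphere c hR.le θ))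
    exact hd.smul ((hterm q hq).sub (hterm p hp))
  have hint : (∮ z in C(c, R), (ld q z - ld p z)) = ∫ θ in (0:ℝ)..2 * π, F θ := rfl
  rw [hint, intervalIntegral.integral_eq_sub_of_hasDerivAt (fun θ _ => key θ)
    (hFcont.intervalIntegrable 0 (2 * π))]
  have hper : circleMap c R (2 * π) = circleMap c R 0 := by
    simpa using (periodic_circleMap c R) 0
  rw [hΦ]
  simp [hper]

lemma integral_ld_roots (p : ℂ[X]) (hp : p ≠ 0) (c : ℂ) (R : ℝ) (hR : 0 < R)
    (h : ∀ z ∈ sphere c R, eval z p ≠ 0) :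
    (∮ z in C(c, R), ld p z)
      = (2 * π * I) * ((p.roots.filter fun z => ‖z - c‖ < R).card : ℂ) := by
  have hsp : p.roots.card = p.natDegree :=
    splits_iff_card_roots.1 (IsAlgClosed.splits p)
  have hfac := C_leadingCoeff_mul_prod_multiset_X_sub_C hsp
  have hroots : ∀ r ∈ p.roots, ‖r - c‖ ≠ R := by
    intro r hr hrc
    exact h r (by rwa [mem_sphere_iff_norm]) ((mem_roots hp).1 hr)
  have := integral_ld_prod c R hR p.roots p.leadingCoeff
    (leadingCoeff_ne_zero.2 hp) hroots
  rwa [hfac] at this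

lemma circleIntegrable_ld (p : ℂ[X]) (c : ℂ) (R : ℝ) (hR : 0 < R)
    (h : ∀ z ∈ sphere c R, eval z p ≠ 0) : CircleIntegrable (ld p) c R :=
  ContinuousOn.circleIntegrable hR.le
    (((p.derivative.continuous_aeval).continuousOn).div
      ((p.continuous_aeval).continuousOn) h)

/-- Rouché's theorem for polynomials over ℂ. -/
lemma rouche (p q : ℂ[X]) (c : ℂ) (R : ℝ) (hR : 0 < R)
    (h : ∀ z ∈ sphere c R, ‖eval z q - eval z p‖ < ‖eval z p‖) :
    (q.roots.filter fun z => ‖z - c‖ < R).card =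
      (p.roots.filter fun z => ‖z - c‖ < R).card := by
  have hps : ∀ z ∈ sphere c R, eval z p ≠ 0 := by
    intro z hz h0
    have := h z hz
    rw [h0] at this
    simp at this
    exact (norm_nonneg _).not_gt this
  have hqs : ∀ z ∈ sphere c R, eval z q ≠ 0 := by
    intro z hz h0
    have := h z hz
    rw [h0, zero_sub, norm_neg] at this
    exact lt_irrefl _ this
  have hcR : (c + R : ℂ) ∈ sphere c R := by
    rw [mem_sphere_iff_norm]
    simp [abs_of_nonneg hR.le]
  have hp0 : p ≠ 0 := fun h0 => hps _ hcR (by simp [h0])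
  have hq0 : q ≠ 0 := fun h0 => hqs _ hcR (by simp [h0])
  have hsub := integral_ld_sub_eq_zero p q c R hR h
  rw [circleIntegral.integral_sub (circleIntegrable_ld q c R hR hqs)
      (circleIntegrable_ld p c R hR hps), sub_eq_zero,
    integral_ld_roots p hp0 c R hR hps, integral_ld_roots q hq0 c R hR hqs] at hsub
  have h2πI : (2 * (π:ℂ) * I) ≠ 0 := by
    simp [Real.pi_ne_zero, Complex.I_ne_zero]
  have := mul_left_cancel₀ h2πI hsub
  exact_mod_cast this

lemma card_filter_finsum {ι : Type*} (s : Finset ι) (f : ι → Multiset ℂ)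
    (p : ℂ → Prop) [DecidablePred p] :
    (Multiset.filter p (∑ i ∈ s, f i)).card = ∑ i ∈ s, (Multiset.filter p (f i)).card := by
  classical
  induction s using Finset.induction with
  | empty => simp
  | insert _ _ h ih =>
    rw [Finset.sum_insert h, Multiset.filter_add, Multiset.card_add, ih, Finset.sum_insert h]

end RCAux
end

/-- Quantitative continuity of roots (Rouché-type perturbation):
if f = a₀ ∏ (X - αᵢ)^{eᵢ} with distinct roots αᵢ, and g is obtained from f by perturbing
each of the coefficients of X^0, ..., X^n by less than ε = δ/M, then g has exactly eⱼ zeros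
(with multiplicity) in the open disk of center αⱼ and radius γ. -/
theorem roots_continuity (n m : ℕ) (hn : 1 ≤ n) (hm : 0 < m)
    (a0 : ℂ) (ha0 : a0 ≠ 0) (α : Fin m → ℂ) (hα : Function.Injective α)
    (e : Fin m → ℕ) (he : ∑ i, e i = n)
    (f : Polynomial ℂ)
    (hf : f = Polynomial.C a0 * ∏ i, (Polynomial.X - Polynomial.C (α i)) ^ e i)
    (γ : ℝ) (hγ : 0 < γ)
    (hγ2 : ∀ i j, i ≠ j → 2 * γ < ‖α i - α j‖)
    (M δ ε : ℝ)
    (hM : M = Finset.univ.sup' (Finset.univ_nonempty_iff.mpr ⟨⟨0, hm⟩⟩)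
      (fun j => ∑ i ∈ Finset.range (n + 1), (γ + ‖α j‖) ^ i))
    (hδ : δ = Finset.univ.inf' (Finset.univ_nonempty_iff.mpr ⟨⟨0, hm⟩⟩)
      (fun j => ‖a0‖ * γ ^ e j *
        ∏ i ∈ Finset.univ.erase j, (‖α i - α j‖ - γ) ^ e i))
    (hε : ε = δ / M)
    (E : ℕ → ℂ) (hE : ∀ i ≤ n, ‖E i‖ < ε)
    (g : Polynomial ℂ)
    (hg : g = ∑ i ∈ Finset.range (n + 1), Polynomial.C (f.coeff i + E i) * Polynomial.X ^ i) :
    ∀ j : Fin m, (g.roots.filter fun z => ‖z - α j‖ < γ).card = e j := by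
  intro j
  -- positivity facts
  have hne : (Finset.univ : Finset (Fin m)).Nonempty := Finset.univ_nonempty_iff.mpr ⟨⟨0, hm⟩⟩
  have hMpos : 0 < M := by
    rw [hM]
    refine (Finset.lt_sup'_iff hne).2 ⟨j, Finset.mem_univ j, ?_⟩
    refine Finset.sum_pos (fun i _ => pow_pos ?_ i) (by simp)
    positivity
  have hδpos : 0 < δ := by
    rw [hδ]
    refine (Finset.lt_inf'_iff hne).2 fun b _ => ?_
    have h1 : (0:ℝ) < ‖a0‖ := by simpa [norm_pos_iff] using ha0
    refine mul_pos (mul_pos h1 (pow_pos hγ _)) (Finset.prod_pos fun i hi => ?_)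
    have hib : i ≠ b := Finset.ne_of_mem_erase hi
    have := hγ2 i b hib
    refine pow_pos (by linarith) _
  have hεpos : 0 < ε := hε ▸ div_pos hδpos hMpos
  -- natDegree of f
  have hfne : f ≠ 0 := by
    rw [hf]
    exact mul_ne_zero (Polynomial.C_ne_zero.2 ha0)
      (Finset.prod_ne_zero_iff.2 fun i _ => pow_ne_zero _ (Polynomial.X_sub_C_ne_zero _))
  have hdeg : f.natDegree = n := by
    rw [hf, Polynomial.natDegree_C_mul ha0, Polynomial.natDegree_prod _ _
      (fun i _ => pow_ne_zero _ (Polynomial.X_sub_C_ne_zero _))]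
    simp [Polynomial.natDegree_pow, Polynomial.natDegree_X_sub_C, he]
  -- g = f + h
  set h : Polynomial ℂ := ∑ i ∈ Finset.range (n + 1), Polynomial.C (E i) * Polynomial.X ^ i
    with hh
  have hgf : g = f + h := by
    have hfs : f = ∑ i ∈ Finset.range (n + 1), Polynomial.C (f.coeff i) * Polynomial.X ^ i := by
      conv_lhs => rw [Polynomial.as_sum_range' f (n + 1) (by omega)]
      exact Finset.sum_congr rfl fun i _ => (Polynomial.C_mul_X_pow_eq_monomial).symm
    rw [hg, hh]
    simp_rw [Polynomial.C_add, add_mul]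
    rw [Finset.sum_add_distrib, ← hfs]
  -- evaluation of h
  have hevalh : ∀ z : ℂ, Polynomial.eval z h = ∑ i ∈ Finset.range (n + 1), E i * z ^ i := by
    intro z
    rw [hh, Polynomial.eval_finset_sum]
    simp
  -- sphere estimate
  have hsphere : ∀ z ∈ Metric.sphere (α j : ℂ) γ,
      ‖Polynomial.eval z g - Polynomial.eval z f‖
        < ‖Polynomial.eval z f‖ := by
    intro z hz
    have hzγ : ‖z - α j‖ = γ := by rwa [mem_sphere_iff_norm] at hz
    have hzabs : ‖z‖ ≤ γ + ‖α j‖ := by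
      calc ‖z‖ = ‖(z - α j) + α j‖ := by ring_nf
      _ ≤ ‖z - α j‖ + ‖α j‖ := norm_add_le _ _
      _ = γ + ‖α j‖ := by rw [hzγ]
    set A : ℝ := γ + ‖α j‖ with hA
    have hApos : 0 < A := by positivity
    -- |eval z h| < δ
    have hhlt : ‖Polynomial.eval z h‖ < δ := by
      calc ‖Polynomial.eval z h‖
          ≤ ∑ i ∈ Finset.range (n + 1), ‖E i * z ^ i‖ := by
            rw [hevalh]; exact norm_sum_le _ _
        _ < ∑ i ∈ Finset.range (n + 1), ε * A ^ i := by
            refine Finset.sum_lt_sum_of_nonempty (by simp) fun i hi => ?_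
            rw [norm_mul, norm_pow]
            calc ‖E i‖ * ‖z‖ ^ i
                ≤ ‖E i‖ * A ^ i :=
                  mul_le_mul_of_nonneg_left (pow_le_pow_left₀ (norm_nonneg z) hzabs i)
                    (norm_nonneg _)
              _ < ε * A ^ i := by
                  refine mul_lt_mul_of_pos_right ?_ (pow_pos hApos i)
                  exact hE i (Nat.lt_succ_iff.1 (Finset.mem_range.1 hi))
        _ = ε * ∑ i ∈ Finset.range (n + 1), A ^ i := by rw [Finset.mul_sum]
        _ ≤ ε * M := by
            refine mul_le_mul_of_nonneg_left ?_ hεpos.le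
            rw [hM, hA]
            exact Finset.le_sup' (fun j => ∑ i ∈ Finset.range (n + 1),
              (γ + ‖α j‖) ^ i) (Finset.mem_univ j)
        _ = δ := by rw [hε]; field_simp
    -- δ ≤ |eval z f|
    have hflb : δ ≤ ‖Polynomial.eval z f‖ := by
      have hev : ‖Polynomial.eval z f‖
          = ‖a0‖ * ∏ i, ‖z - α i‖ ^ e i := by
        rw [hf]
        simp only [Polynomial.eval_mul, Polynomial.eval_C, Polynomial.eval_prod,
          Polynomial.eval_pow, Polynomial.eval_sub, Polynomial.eval_X, norm_mul, norm_prod, norm_pow]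
      rw [hev, ← Finset.mul_prod_erase Finset.univ _ (Finset.mem_univ j), hzγ]
      calc δ ≤ ‖a0‖ * γ ^ e j *
            ∏ i ∈ Finset.univ.erase j, (‖α i - α j‖ - γ) ^ e i := by
            rw [hδ]; exact Finset.inf'_le _ (Finset.mem_univ j)
        _ ≤ ‖a0‖ * (γ ^ e j *
            ∏ i ∈ Finset.univ.erase j, ‖z - α i‖ ^ e i) := by
            rw [← mul_assoc]
            refine mul_le_mul_of_nonneg_left ?_ (by positivity)
            refine Finset.prod_le_prod (fun i hi => ?_) (fun i hi => ?_)
            · have := hγ2 i j (Finset.ne_of_mem_erase hi)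
              refine pow_nonneg (by linarith) _
            · refine pow_le_pow_left₀ ?_ ?_ _
              · have := hγ2 i j (Finset.ne_of_mem_erase hi)
                linarith
              · have h1 : ‖α i - α j‖
                    ≤ ‖α i - z‖ + ‖z - α j‖ :=
                  norm_sub_le_norm_sub_add_norm_sub _ _ _
                have h2 : ‖α i - z‖ = ‖z - α i‖ :=
                  norm_sub_rev _ _
                rw [hzγ] at h1
                linarith [h1, h2]
    calc ‖Polynomial.eval z g - Polynomial.eval z f‖
        = ‖Polynomial.eval z h‖ := by rw [hgf]; simp [Polynomial.eval_add, add_sub_cancel_left]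
      _ < δ := hhlt
      _ ≤ ‖Polynomial.eval z f‖ := hflb
  -- apply Rouché
  rw [RCAux.rouche f g (α j) γ hγ hsphere]
  -- count roots of f in the ball
  have hroots : f.roots = ∑ i : Fin m, e i • ({α i} : Multiset ℂ) := by
    rw [hf, Polynomial.roots_C_mul _ ha0, Polynomial.roots_prod _ _ ?_]
    · have hb : ((Finset.univ : Finset (Fin m)).val.bind
          fun i => ((X - C (α i)) ^ e i).roots)
          = ∑ i : Fin m, ((X - C (α i)) ^ e i).roots := rfl
      rw [hb]
      refine Finset.sum_congr rfl fun i _ => ?_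
      rw [Polynomial.roots_pow, Polynomial.roots_X_sub_C]
    · rw [Ne, Finset.prod_eq_zero_iff]
      push_neg
      exact fun i _ => pow_ne_zero _ (Polynomial.X_sub_C_ne_zero _)
  rw [hroots, RCAux.card_filter_finsum]
  have hterm : ∀ i : Fin m,
      (Multiset.filter (fun z => ‖z - α j‖ < γ) (e i • ({α i} : Multiset ℂ))).card
        = if i = j then e i else 0 := by
    intro i
    rw [Multiset.filter_nsmul, Multiset.card_nsmul, Multiset.filter_singleton]
    by_cases hij : i = j
    · subst hij
      rw [if_pos (by simpa using hγ), if_pos rfl, Multiset.card_singleton, mul_one]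
    · have hnlt : ¬ ‖α i - α j‖ < γ := by
        have := hγ2 i j hij
        intro hlt
        linarith
      simp [hnlt, hij]
  rw [Finset.sum_congr rfl fun i _ => hterm i]
  simp
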